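/- The q-Stirling number of the first kind satisfies c_q[n,k] = Σ_{T ∈ A(n, n−k)} q^{s(T)} · (1+q)^{r(T)}, where A(n, n−k) is the set of placements of n−k rooks, no two in the same column, on the shaded squares of the staircase board of length n (shading every other antidiagonal starting with the lowest); s(T) is the number of squares below the rooks and r(T) is the number of rooks not in the first row. -/

import Mathlib

open scoped Classical
open Polynomial

/-- Rook placements of `n` rooks, no two in the same column, on the staircase board of
length `m` (column `c`, indexed from the left starting at `0`, has `m - 1 - c` squares).
`f c = 0` means column `c` is empty, and `f c = b + 1` means column `c` carries a rook
with `b` squares below it. -/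
def Rooks (m n : ℕ) : Finset (Fin (m - 1) → Fin m) :=
  Finset.univ.filter fun f =>
    (∀ c, (f c : ℕ) ≤ m - 1 - (c : ℕ)) ∧
    (Finset.univ.filter fun c => (f c : ℕ) ≠ 0).card = n

/-- The total number of squares strictly below the rooks of the placement `f`. -/
def rbelow {m : ℕ} (f : Fin (m - 1) → Fin m) : ℕ := ∑ c, ((f c : ℕ) - 1)

/-- The (unsigned) `q`-Stirling numbers of the first kind:
`c_q[n,k] = c_q[n-1,k-1] + [n-1]_q ⬝ c_q[n-1,k]`, `c_q[n,0] = δ_{n,0}`. -/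
noncomputable def cq : ℕ → ℕ → Polynomial ℤ
  | 0, 0 => 1
  | 0, _ + 1 => 0
  | _ + 1, 0 => 0
  | n + 1, k + 1 => cq n k + (∑ i ∈ Finset.range n, X ^ i) * cq n (k + 1)

/-- Placements in `Rooks m n` in which every rook lies on a shaded square of the
alternately shaded staircase board: a square is shaded exactly when the number of
squares below it in its column is even. -/
def ShadedRooks (m n : ℕ) : Finset (Fin (m - 1) → Fin m) :=
  (Rooks m n).filter fun f => ∀ c, (f c : ℕ) ≠ 0 → Even ((f c : ℕ) - 1)

/-- The number of rooks of the placement `f` that are not in the first row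
(the first-row square of column `c` is the one with `m - 2 - c` squares below it). -/
def nrow {m : ℕ} (f : Fin (m - 1) → Fin m) : ℕ :=
  (Finset.univ.filter fun c =>
    (f c : ℕ) ≠ 0 ∧ (f c : ℕ) ≠ m - 1 - (c : ℕ)).card



lemma Upoly (p : ℕ) : (∑ b ∈ Finset.range (p+1),
      if Even b then (X : Polynomial ℤ)^b * (1+X)^(if b = p then 0 else 1) else 0)
    = ∑ i ∈ Finset.range (p+1), X^i := by
  induction p using Nat.twoStepInduction with
  | zero => simp
  | one =>
    rw [Finset.sum_range_succ, Finset.sum_range_succ, Finset.sum_range_succ, Finset.sum_range_succ]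
    norm_num
  | more p ih _ =>
    rw [Finset.sum_range_succ, Finset.sum_range_succ, Finset.sum_range_succ]
    rw [Finset.sum_range_succ, Finset.sum_range_succ, Finset.sum_range_succ]
    rw [Finset.sum_range_succ, Finset.sum_range_succ] at ih
    have hcongr : (∑ b ∈ Finset.range p,
        if Even b then (X : Polynomial ℤ)^b * (1+X)^(if b = p+2 then 0 else 1) else 0)
      = ∑ b ∈ Finset.range p,
        if Even b then (X : Polynomial ℤ)^b * (1+X)^(if b = p then 0 else 1) else 0 := by
      apply Finset.sum_congr rfl
      intro b hb
      simp only [Finset.mem_range] at hb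
      rw [if_neg (by omega : ¬ (b = p + 2)), if_neg (by omega : ¬ (b = p))]
    rw [hcongr]
    have e1 : (if p = p + 2 then 0 else 1) = 1 := if_neg (by omega)
    have e2 : (if p + 1 = p + 2 then 0 else 1) = 1 := if_neg (by omega)
    rcases Nat.even_or_odd p with he | ho
    · have h1 : ¬ Even (p+1) := by simp [Nat.even_add_one, he]
      have h2 : Even (p+2) := he.add (by norm_num)
      simp only [if_pos he, if_neg h1, if_pos h2, if_pos rfl, e1, eq_self_iff_true, if_true] at ih ⊢
      linear_combination ih
    · have hpe : ¬ Even p := Nat.not_even_iff_odd.mpr ho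
      have h1 : Even (p+1) := Nat.even_add_one.mpr hpe
      have h2 : ¬ Even (p+2) := by rw [Nat.even_add_one]; simpa using h1
      simp only [if_neg hpe, if_pos h1, if_neg h2, e2] at ih ⊢
      linear_combination ih

namespace CqAux
open Finset

noncomputable def S (m jj : ℕ) : Polynomial ℤ :=
  ∑ f ∈ ShadedRooks m jj, X ^ rbelow f * (1 + X) ^ nrow f

lemma mem_shadedRooks {m nn : ℕ} {f : Fin (m-1) → Fin m} :
    f ∈ ShadedRooks m nn ↔ (∀ c, (f c : ℕ) ≤ m - 1 - (c : ℕ)) ∧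
      (Finset.univ.filter fun c => (f c : ℕ) ≠ 0).card = nn ∧
      (∀ c, (f c : ℕ) ≠ 0 → Even ((f c : ℕ) - 1)) := by
  simp [ShadedRooks, Rooks, and_assoc]

def cn (p : ℕ) (v : Fin (p+2)) (g : Fin p → Fin (p+1)) : Fin (p+1) → Fin (p+2) :=
  Fin.cons v (fun c => (g c).castSucc)

def tl (p : ℕ) (f : Fin (p+1) → Fin (p+2)) : Fin p → Fin (p+1) :=
  fun c => ⟨(f c.succ : ℕ) % (p+1), Nat.mod_lt _ p.succ_pos⟩

variable {p : ℕ}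

lemma cn_zero (v : Fin (p+2)) (g : Fin p → Fin (p+1)) : cn p v g 0 = v := rfl

lemma cn_succ (v : Fin (p+2)) (g : Fin p → Fin (p+1)) (c : Fin p) :
    (cn p v g c.succ : ℕ) = (g c : ℕ) := by simp [cn]

lemma tl_val {f : Fin (p+1) → Fin (p+2)} (hb : ∀ c, (f c : ℕ) ≤ p + 2 - 1 - (c : ℕ))
    (c : Fin p) : (tl p f c : ℕ) = (f c.succ : ℕ) := by
  have h := hb c.succ
  simp only [Fin.val_succ] at h
  exact Nat.mod_eq_of_lt (by omega)

lemma cn_tl {f : Fin (p+1) → Fin (p+2)} (hb : ∀ c, (f c : ℕ) ≤ p + 2 - 1 - (c : ℕ)) :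
    cn p (f 0) (tl p f) = f := by
  funext c
  refine Fin.cases rfl (fun c' => ?_) c
  apply Fin.ext
  rw [cn_succ, tl_val hb]

lemma tl_cn (v : Fin (p+2)) (g : Fin p → Fin (p+1)) : tl p (cn p v g) = g := by
  funext c
  apply Fin.ext
  show (cn p v g c.succ : ℕ) % (p+1) = g c
  rw [cn_succ]
  exact Nat.mod_eq_of_lt (g c).isLt

lemma rbelow_cn (v : Fin (p+2)) (g : Fin p → Fin (p+1)) :
    rbelow (m := p+2) (cn p v g) = ((v : ℕ) - 1) + rbelow (m := p+1) g := by
  have h1 : rbelow (m := p+2) (cn p v g) = ∑ c : Fin (p+1), ((cn p v g c : ℕ) - 1) := rfl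
  have h2 : rbelow (m := p+1) g = ∑ c : Fin p, ((g c : ℕ) - 1) := rfl
  rw [h1, h2, Fin.sum_univ_succ]
  simp [cn_succ, cn_zero]

lemma ncols_eq {m : ℕ} (f : Fin (m-1) → Fin m) :
    (Finset.univ.filter fun c => (f c : ℕ) ≠ 0).card
      = ∑ c, if (f c : ℕ) ≠ 0 then 1 else 0 := Finset.card_filter _ _

lemma ncols_cn (v : Fin (p+2)) (g : Fin p → Fin (p+1)) :
    ((Finset.univ.filter fun c : Fin (p+1) => (cn p v g c : ℕ) ≠ 0).card : ℕ)
      = (if (v : ℕ) ≠ 0 then 1 else 0)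
        + (Finset.univ.filter fun c : Fin p => (g c : ℕ) ≠ 0).card := by
  rw [Finset.card_filter, Finset.card_filter, Fin.sum_univ_succ]
  simp [cn_zero, cn_succ]

lemma nrow_cn (v : Fin (p+2)) (g : Fin p → Fin (p+1)) :
    nrow (m := p+2) (cn p v g)
      = (if (v : ℕ) ≠ 0 ∧ (v : ℕ) ≠ p + 1 then 1 else 0) + nrow (m := p+1) g := by
  have h1 : nrow (m := p+2) (cn p v g) = ∑ c : Fin (p+1),
      if ((cn p v g c : ℕ) ≠ 0 ∧ (cn p v g c : ℕ) ≠ p + 2 - 1 - (c : ℕ)) then 1 else 0 :=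
    Finset.card_filter _ _
  have h2 : nrow (m := p+1) g = ∑ c : Fin p,
      if ((g c : ℕ) ≠ 0 ∧ (g c : ℕ) ≠ p + 1 - 1 - (c : ℕ)) then 1 else 0 :=
    Finset.card_filter _ _
  rw [h1, h2, Fin.sum_univ_succ]
  have hsum : (∑ c : Fin p, if ((cn p v g c.succ : ℕ) ≠ 0 ∧ (cn p v g c.succ : ℕ) ≠ p + 2 - 1 - ((c.succ : Fin (p+1)) : ℕ)) then 1 else 0)
      = ∑ c : Fin p, if ((g c : ℕ) ≠ 0 ∧ (g c : ℕ) ≠ p + 1 - 1 - (c : ℕ)) then 1 else 0 := by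
    refine Finset.sum_congr rfl fun c _ => ?_
    rw [cn_succ]
    rw [show ((c.succ : Fin (p+1)) : ℕ) = (c : ℕ) + 1 from rfl,
      show p + 2 - 1 - ((c : ℕ) + 1) = p + 1 - 1 - (c : ℕ) by omega]
  rw [hsum]
  rfl

def Big (p jj : ℕ) : Finset (Fin (p+1) → Fin (p+2)) := ShadedRooks (p+2) jj

def Small (p jj : ℕ) : Finset (Fin p → Fin (p+1)) := ShadedRooks (p+1) jj

lemma mem_Big {p jj : ℕ} {f : Fin (p+1) → Fin (p+2)} :
    f ∈ Big p jj ↔ (∀ c : Fin (p+1), (f c : ℕ) ≤ p + 1 - (c : ℕ)) ∧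
      (Finset.univ.filter fun c : Fin (p+1) => (f c : ℕ) ≠ 0).card = jj ∧
      (∀ c : Fin (p+1), (f c : ℕ) ≠ 0 → Even ((f c : ℕ) - 1)) := mem_shadedRooks

lemma mem_Small {p jj : ℕ} {g : Fin p → Fin (p+1)} :
    g ∈ Small p jj ↔ (∀ c : Fin p, (g c : ℕ) ≤ p - (c : ℕ)) ∧
      (Finset.univ.filter fun c : Fin p => (g c : ℕ) ≠ 0).card = jj ∧
      (∀ c : Fin p, (g c : ℕ) ≠ 0 → Even ((g c : ℕ) - 1)) := mem_shadedRooks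

lemma S_eq_big (p jj : ℕ) : S (p+2) jj
    = ∑ f ∈ Big p jj, X ^ rbelow (m := p+2) f * (1+X) ^ nrow (m := p+2) f := rfl

lemma S_eq_small (p jj : ℕ) : S (p+1) jj
    = ∑ g ∈ Small p jj, X ^ rbelow (m := p+1) g * (1+X) ^ nrow (m := p+1) g := rfl

lemma partA (p j : ℕ) :
    ∑ f ∈ ((Big p (j+1)).filter
        (fun f => (f 0 : ℕ) = 0)), X ^ rbelow (m := p+2) f * (1+X) ^ nrow (m := p+2) f
      = S (p+1) (j+1) := by
  rw [S_eq_small]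
  refine Finset.sum_nbij' (fun f => tl p f) (fun g => cn p 0 g) ?_ ?_ ?_ ?_ ?_
  · intro f hf
    obtain ⟨hfm, h0⟩ := Finset.mem_filter.mp hf
    obtain ⟨hb, hcard, hsh⟩ := mem_Big.mp hfm
    refine mem_Small.mpr ⟨?_, ?_, ?_⟩
    · intro c
      rw [tl_val hb]
      have h := hb c.succ
      have h2 : ((c.succ : Fin (p+1)) : ℕ) = (c : ℕ) + 1 := rfl
      rw [h2] at h
      omega
    · show (Finset.univ.filter fun c : Fin p => (tl p f c : ℕ) ≠ 0).card = j + 1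
      have h1 : (Finset.univ.filter fun c : Fin p => (tl p f c : ℕ) ≠ 0).card
          = ∑ c : Fin p, if (f c.succ : ℕ) ≠ 0 then 1 else 0 := by
        rw [Finset.card_filter]
        exact Finset.sum_congr rfl fun c _ => by rw [tl_val hb]
      have h2 : (Finset.univ.filter fun c : Fin (p+1) => (f c : ℕ) ≠ 0).card
          = ∑ c : Fin (p+1), if (f c : ℕ) ≠ 0 then 1 else 0 := Finset.card_filter _ _
      have h3 : (Finset.univ.filter fun c : Fin (p+1) => (f c : ℕ) ≠ 0).card = j + 1 := hcard
      rw [h2, Fin.sum_univ_succ, if_neg (by simpa using h0)] at h3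
      rw [h1]
      omega
    · intro c hc
      rw [tl_val hb] at hc ⊢
      exact hsh c.succ hc
  · intro g hg
    obtain ⟨hbg, hcg, hshg⟩ := mem_Small.mp hg
    refine Finset.mem_filter.mpr ⟨mem_Big.mpr ⟨?_, ?_, ?_⟩, ?_⟩
    · intro c
      refine Fin.cases ?_ (fun c' => ?_) c
      · show ((0 : Fin (p+2)) : ℕ) ≤ p + 2 - 1 - ((0 : Fin (p+1)) : ℕ)
        simp
      · show (cn p 0 g c'.succ : ℕ) ≤ p + 2 - 1 - ((c'.succ : Fin (p+1)) : ℕ)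
        rw [cn_succ]
        have h := hbg c'
        have h2 : ((c'.succ : Fin (p+1)) : ℕ) = (c' : ℕ) + 1 := rfl
        rw [h2]
        omega
    · show (Finset.univ.filter fun c : Fin (p+1) => (cn p 0 g c : ℕ) ≠ 0).card = j + 1
      rw [ncols_cn]
      have : (Finset.univ.filter fun c : Fin p => (g c : ℕ) ≠ 0).card = j + 1 := hcg
      rw [this]; simp
    · intro c
      refine Fin.cases ?_ (fun c' => ?_) c
      · intro hc'
        simp [cn_zero] at hc'
      · intro hc'
        rw [cn_succ] at hc' ⊢
        exact hshg c' hc'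
    · show ((cn p 0 g 0 : Fin (p+2)) : ℕ) = 0
      simp [cn_zero]
  · intro f hf
    obtain ⟨hfm, h0⟩ := Finset.mem_filter.mp hf
    obtain ⟨hb, _, _⟩ := mem_Big.mp hfm
    have h := cn_tl hb
    have hf0 : f 0 = 0 := Fin.ext (by simpa using h0)
    rw [hf0] at h
    exact h
  · intro g hg
    exact tl_cn 0 g
  · intro f hf
    obtain ⟨hfm, h0⟩ := Finset.mem_filter.mp hf
    obtain ⟨hb, _, _⟩ := mem_Big.mp hfm
    have h := cn_tl hb
    have hf0 : f 0 = 0 := Fin.ext (by simpa using h0)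
    rw [hf0] at h
    conv_lhs => rw [← h]
    rw [rbelow_cn, nrow_cn]
    norm_num

lemma partB (p j : ℕ) :
    ∑ f ∈ ((Big p (j+1)).filter
        (fun f => ¬ (f 0 : ℕ) = 0)), X ^ rbelow (m := p+2) f * (1+X) ^ nrow (m := p+2) f
      = (∑ i ∈ Finset.range (p+1), X ^ i) * S (p+1) j := by
  have step1 :
      ∑ f ∈ ((Big p (j+1)).filter (fun f => ¬ (f 0 : ℕ) = 0)),
          X ^ rbelow (m := p+2) f * (1+X) ^ nrow (m := p+2) f
        = ∑ vg ∈ ((Finset.univ.filter fun v : Fin (p+2) =>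
              (v : ℕ) ≠ 0 ∧ Even ((v : ℕ) - 1)) ×ˢ Small p j),
            ((X : Polynomial ℤ) ^ ((vg.1 : ℕ) - 1) * (1+X) ^ (if (vg.1 : ℕ) ≠ p + 1 then 1 else 0))
              * (X ^ rbelow (m := p+1) vg.2 * (1+X) ^ nrow (m := p+1) vg.2) := by
    refine Finset.sum_nbij' (fun f => (f 0, tl p f)) (fun vg => cn p vg.1 vg.2) ?_ ?_ ?_ ?_ ?_
    · intro f hf
      obtain ⟨hfm, h0⟩ := Finset.mem_filter.mp hf
      obtain ⟨hb, hcard, hsh⟩ := mem_Big.mp hfm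
      refine Finset.mem_product.mpr ⟨Finset.mem_filter.mpr ⟨Finset.mem_univ _, h0, hsh 0 h0⟩, ?_⟩
      refine mem_Small.mpr ⟨?_, ?_, ?_⟩
      · intro c
        rw [tl_val hb]
        have h := hb c.succ
        have h2 : ((c.succ : Fin (p+1)) : ℕ) = (c : ℕ) + 1 := rfl
        rw [h2] at h
        omega
      · show (Finset.univ.filter fun c : Fin p => (tl p f c : ℕ) ≠ 0).card = j
        have h1 : (Finset.univ.filter fun c : Fin p => (tl p f c : ℕ) ≠ 0).card
            = ∑ c : Fin p, if (f c.succ : ℕ) ≠ 0 then 1 else 0 := by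
          rw [Finset.card_filter]
          exact Finset.sum_congr rfl fun c _ => by rw [tl_val hb]
        have h2 : (Finset.univ.filter fun c : Fin (p+1) => (f c : ℕ) ≠ 0).card
            = ∑ c : Fin (p+1), if (f c : ℕ) ≠ 0 then 1 else 0 := Finset.card_filter _ _
        have h3 : (Finset.univ.filter fun c : Fin (p+1) => (f c : ℕ) ≠ 0).card = j + 1 := hcard
        rw [h2, Fin.sum_univ_succ, if_pos h0] at h3
        rw [h1]
        omega
      · intro c hc
        rw [tl_val hb] at hc ⊢
        exact hsh c.succ hc
    · rintro ⟨v, g⟩ hvg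
      dsimp only
      obtain ⟨hv, hg⟩ := Finset.mem_product.mp hvg
      obtain ⟨-, hv0, hve⟩ := Finset.mem_filter.mp hv
      obtain ⟨hbg, hcg, hshg⟩ := mem_Small.mp hg
      refine Finset.mem_filter.mpr ⟨mem_Big.mpr ⟨?_, ?_, ?_⟩, ?_⟩
      · intro c
        refine Fin.cases ?_ (fun c' => ?_) c
        · show ((v : Fin (p+2)) : ℕ) ≤ p + 1 - ((0 : Fin (p+1)) : ℕ)
          have := v.isLt
          simp only [Fin.val_zero, Nat.sub_zero]
          omega
        · show (cn p v g c'.succ : ℕ) ≤ p + 1 - ((c'.succ : Fin (p+1)) : ℕ)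
          rw [cn_succ]
          have h := hbg c'
          have h2 : ((c'.succ : Fin (p+1)) : ℕ) = (c' : ℕ) + 1 := rfl
          rw [h2, Nat.succ_sub_succ]
          exact h
      · show (Finset.univ.filter fun c : Fin (p+1) => (cn p v g c : ℕ) ≠ 0).card = j + 1
        rw [ncols_cn, if_pos hv0, hcg]
        omega
      · intro c
        refine Fin.cases ?_ (fun c' => ?_) c
        · intro _
          exact hve
        · intro hc'
          rw [cn_succ] at hc' ⊢
          exact hshg c' hc'
      · show ¬ ((cn p v g 0 : Fin (p+2)) : ℕ) = 0
        exact hv0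
    · intro f hf
      obtain ⟨hfm, h0⟩ := Finset.mem_filter.mp hf
      obtain ⟨hb, -, -⟩ := mem_Big.mp hfm
      exact cn_tl hb
    · rintro ⟨v, g⟩ hvg
      exact Prod.ext (cn_zero v g) (tl_cn v g)
    · intro f hf
      obtain ⟨hfm, h0⟩ := Finset.mem_filter.mp hf
      obtain ⟨hb, -, hsh⟩ := mem_Big.mp hfm
      conv_lhs => rw [← cn_tl hb]
      rw [rbelow_cn, nrow_cn]
      have hcond : (if (f 0 : ℕ) ≠ 0 ∧ (f 0 : ℕ) ≠ p + 1 then 1 else 0)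
          = (if (f 0 : ℕ) ≠ p + 1 then 1 else 0) := by
        by_cases h : (f 0 : ℕ) = p + 1 <;> simp [h, h0]
      rw [hcond, pow_add, pow_add]
      ring
  rw [step1, Finset.sum_product]
  dsimp only
  rw [← Finset.sum_mul_sum _ _ (fun v : Fin (p+2) => (X : Polynomial ℤ) ^ ((v : ℕ) - 1) * (1+X) ^ (if (v : ℕ) ≠ p + 1 then 1 else 0))
    (fun g : Fin p → Fin (p+1) => X ^ rbelow (m := p+1) g * (1+X) ^ nrow (m := p+1) g), ← S_eq_small]
  congr 1
  -- reindex the v-sum and apply Upoly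
  rw [Finset.sum_filter, Fin.sum_univ_eq_sum_range
    (fun b => if b ≠ 0 ∧ Even (b - 1) then
      (X : Polynomial ℤ) ^ (b - 1) * (1+X) ^ (if b ≠ p + 1 then 1 else 0) else 0) (p+2)]
  rw [Finset.sum_range_succ']
  have h0 : (if (0 : ℕ) ≠ 0 ∧ Even ((0:ℕ) - 1) then
      (X : Polynomial ℤ) ^ ((0:ℕ) - 1) * (1+X) ^ (if (0:ℕ) ≠ p + 1 then 1 else 0) else 0) = 0 := by
    simp
  rw [h0, add_zero, ← Upoly p]
  refine Finset.sum_congr rfl fun b hb => ?_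
  simp only [Finset.mem_range] at hb
  have h1 : (b + 1 ≠ 0 ∧ Even (b + 1 - 1)) ↔ Even b := by
    constructor
    · rintro ⟨-, h⟩; simpa using h
    · intro h; exact ⟨by omega, by simpa using h⟩
  by_cases he : Even b
  · rw [if_pos (h1.mpr he), if_pos he]
    have h2 : b + 1 - 1 = b := rfl
    rw [h2]
    have h3 : (if b + 1 ≠ p + 1 then 1 else 0) = (if b = p then 0 else 1) := by
      by_cases h : b = p <;> simp [h]
    rw [h3]
  · rw [if_neg (fun hcon => he (h1.mp hcon)), if_neg he]

lemma S_rec (p j : ℕ) :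
    S (p+2) (j+1) = S (p+1) (j+1) + (∑ i ∈ Finset.range (p+1), X ^ i) * S (p+1) j := by
  rw [S_eq_big, ← Finset.sum_filter_add_sum_filter_not (Big p (j+1)) (fun f => (f 0 : ℕ) = 0),
    partA, partB]

lemma S_succ_zero (m : ℕ) : S (m+1) 0 = 1 := by
  have h : ShadedRooks (m+1) 0 = {(fun _ => 0 : Fin (m+1-1) → Fin (m+1))} := by
    ext f
    rw [Finset.mem_singleton, mem_shadedRooks]
    constructor
    · rintro ⟨-, hcard, -⟩
      have hempty := Finset.card_eq_zero.mp hcard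
      funext c
      have hc : c ∉ (Finset.univ.filter fun c => (f c : ℕ) ≠ 0) := by
        rw [hempty]; exact Finset.notMem_empty c
      rw [Finset.mem_filter] at hc
      push_neg at hc
      exact Fin.ext (by simpa using hc (Finset.mem_univ c))
    · rintro rfl
      refine ⟨fun c => by simp, ?_, fun c hc => by simp at hc⟩
      simp
  rw [S, h, Finset.sum_singleton]
  have h1 : rbelow (m := m+1) (fun _ => (0 : Fin (m+1))) = 0 := by simp [rbelow]
  have h2 : nrow (m := m+1) (fun _ => (0 : Fin (m+1))) = 0 := by simp [nrow]
  rw [h1, h2]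
  simp

lemma S_zero_zero : S 0 0 = 1 := by
  letI : IsEmpty (Fin (0-1)) := inferInstanceAs (IsEmpty (Fin 0))
  have h : ShadedRooks 0 0 = Finset.univ := by
    ext f
    rw [mem_shadedRooks]
    simp
    exact Subsingleton.elim f default
  have hw : ∀ f : Fin (0-1) → Fin 0, (X : Polynomial ℤ) ^ rbelow f * (1+X) ^ nrow f = 1 := by
    intro f
    have h1 : rbelow f = 0 := by simp [rbelow]
    have h2 : nrow f = 0 := by simp [nrow]
    rw [h1, h2]
    simp
  rw [S, h, Finset.sum_congr rfl (fun f _ => hw f), Finset.sum_const, Finset.card_univ]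
  have : Fintype.card (Fin (0-1) → Fin 0) = 1 := by
    rw [Fintype.card_fun]
    simp
  rw [this]
  simp

lemma S_gt (m jj : ℕ) (h : m - 1 < jj) : S m jj = 0 := by
  have hempty : ShadedRooks m jj = ∅ := by
    refine Finset.eq_empty_of_forall_notMem fun f hf => ?_
    obtain ⟨-, hcard, -⟩ := mem_shadedRooks.mp hf
    have hle := Finset.card_filter_le (Finset.univ : Finset (Fin (m-1)))
      (fun c => (f c : ℕ) ≠ 0)
    rw [hcard] at hle
    have hc : (Finset.univ : Finset (Fin (m-1))).card = m - 1 := by simp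
    omega
  rw [S, hempty, Finset.sum_empty]

lemma cq_succ (n k : ℕ) :
    cq (n+1) (k+1) = cq n k + (∑ i ∈ Finset.range n, X ^ i) * cq n (k+1) := by
  rw [cq]

lemma cq_gt : ∀ n k : ℕ, n < k → cq n k = 0 := by
  intro n
  induction n with
  | zero =>
    intro k hk
    cases k with
    | zero => omega
    | succ j => rfl
  | succ n ih =>
    intro k hk
    cases k with
    | zero => omega
    | succ k' =>
      rw [cq_succ, ih k' (by omega), ih (k'+1) (by omega), mul_zero, add_zero]

lemma cq_diag : ∀ n : ℕ, cq n n = 1 := by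
  intro n
  induction n with
  | zero => rfl
  | succ n ih =>
    rw [cq_succ, ih, cq_gt n (n+1) (by omega), mul_zero, add_zero]

lemma cq_eq_S : ∀ n k : ℕ, k ≤ n → cq n k = S n (n - k) := by
  intro n
  induction n with
  | zero =>
    intro k hk
    have hk0 : k = 0 := by omega
    subst hk0
    rw [show cq 0 0 = 1 from rfl, Nat.sub_self, S_zero_zero]
  | succ n ih =>
    intro k hk
    cases k with
    | zero =>
      rw [show cq (n+1) 0 = 0 from rfl, Nat.sub_zero, S_gt (n+1) (n+1) (by omega)]
    | succ k' =>
      by_cases hk' : k' = n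
      · subst hk'
        rw [Nat.sub_self, cq_diag, S_succ_zero]
      · have hlt : k' < n := by omega
        obtain ⟨p, rfl⟩ : ∃ p, n = p + 1 := ⟨n - 1, by omega⟩
        rw [cq_succ, show p + 1 + 1 = p + 2 by omega,
          show (p + 2) - (k' + 1) = (p - k') + 1 by omega, S_rec p (p - k'),
          ih k' (by omega), ih (k'+1) (by omega),
          show (p + 1) - k' = (p - k') + 1 by omega,
          show (p + 1) - (k' + 1) = p - k' by omega]

end CqAux

theorem cq_eq_sum_shaded_rooks (n k : ℕ) (hk : k ≤ n) :
    cq n k = ∑ f ∈ ShadedRooks n (n - k), X ^ rbelow f * (1 + X) ^ nrow f :=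
  CqAux.cq_eq_S n k hk
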